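/- Let H be a graph in the class S (every connected component of H is a path P_r for some r ≥ 1 or a subdivided claw S_{h,i,j} for some 1 ≤ h ≤ i ≤ j). Then H contains no induced subgraph isomorphic to any of 2P_1+2P_2, 2P_1+P_4, 4P_1+P_2, 3P_2, 2P_3 if and only if H is isomorphic to sP_1 for some integer s ≥ 1, or H is isomorphic to an induced subgraph of one of the graphs K_{1,3}+3P_1, K_{1,3}+P_2, P_1+S_{1,1,3}, S_{1,2,3}. -/

import Mathlib

open SimpleGraph

/-- `B` is the black colour class of a black-and-white labelling of `H`:
every edge of `H` joins a vertex of `B` to a vertex outside `B`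
(equivalently, `B` and its complement `Bᶜ` are both independent sets,
i.e. `(B, Bᶜ)` is a bipartition of `H` into two possibly empty independent sets). -/
def IsBWLabelling {V : Type*} (H : SimpleGraph V) (B : Set V) : Prop :=
  ∀ ⦃u v : V⦄, H.Adj u v → (u ∈ B ↔ v ∉ B)

/-- `H` with black class `BH` is a labelled induced subgraph of `G` with black class `BG`:
there is an injective map preserving both adjacency and non-adjacency which maps
black vertices to black vertices and white vertices to white vertices. -/
def LabelledIndSubgraph {VH VG : Type*} (H : SimpleGraph VH) (BH : Set VH)
    (G : SimpleGraph VG) (BG : Set VG) : Prop :=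
  ∃ f : VH → VG, Function.Injective f ∧
    (∀ u v : VH, H.Adj u v ↔ G.Adj (f u) (f v)) ∧
    (∀ u : VH, u ∈ BH ↔ f u ∈ BG)

/-- `G` is strongly `H^ℓ`-free, where `BH` is the black class of the labelling `ℓ`:
there is no bipartition `(BG, BGᶜ)` of `G` such that `H^ℓ` is a labelled induced
subgraph of `(BG, BGᶜ, E_G)`. -/
def StronglyFree {VG VH : Type*} (G : SimpleGraph VG) (H : SimpleGraph VH)
    (BH : Set VH) : Prop :=
  ¬ ∃ BG : Set VG, IsBWLabelling G BG ∧ LabelledIndSubgraph H BH G BG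

/-- `G` is weakly `H^ℓ`-free, where `BH` is the black class of the labelling `ℓ`:
it is not the case that `H^ℓ` is a labelled induced subgraph of `(BG, BGᶜ, E_G)`
for every bipartition `(BG, BGᶜ)` of `G`. -/
def WeaklyFree {VG VH : Type*} (G : SimpleGraph VG) (H : SimpleGraph VH)
    (BH : Set VH) : Prop :=
  ¬ ∀ BG : Set VG, IsBWLabelling G BG → LabelledIndSubgraph H BH G BG

/-- `G` is `H`-free: `G` contains no induced subgraph isomorphic to `H`. -/
def HFree {VG VH : Type*} (G : SimpleGraph VG) (H : SimpleGraph VH) : Prop :=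
  ¬ ∃ f : VH → VG, Function.Injective f ∧ ∀ u v : VH, H.Adj u v ↔ G.Adj (f u) (f v)

/-- The subdivided claw `S_{h,i,j}` (for `1 ≤ h ≤ i ≤ j`): the tree with one centre
vertex `0` of degree `3` and three paths attached to it, with leaves at distance
`h`, `i` and `j` from the centre. The vertices of the three paths are
`1, …, h`, `h+1, …, h+i` and `h+i+1, …, h+i+j`, respectively. -/
def subdividedClaw (h i j : ℕ) : SimpleGraph (Fin (h + i + j + 1)) :=
  SimpleGraph.fromRel (fun a b =>
    (a.val = 0 ∧ (b.val = 1 ∨ b.val = h + 1 ∨ b.val = h + i + 1)) ∨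
    (1 ≤ a.val ∧ b.val = a.val + 1 ∧
      (b.val ≤ h ∨ (h + 1 ≤ a.val ∧ b.val ≤ h + i) ∨
        (h + i + 1 ≤ a.val ∧ b.val ≤ h + i + j))))

/-- `H` belongs to the class `S`: every connected component of `H` is isomorphic
to a path `P_r` for some `r ≥ 1` or to a subdivided claw `S_{h,i,j}` for some
`1 ≤ h ≤ i ≤ j`. -/
def InClassS {V : Type*} (H : SimpleGraph V) : Prop :=
  ∀ c : H.ConnectedComponent,
    (∃ r : ℕ, 1 ≤ r ∧ Nonempty ((H.induce c.supp) ≃g SimpleGraph.pathGraph r)) ∨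
    (∃ h i j : ℕ, 1 ≤ h ∧ h ≤ i ∧ i ≤ j ∧
      Nonempty ((H.induce c.supp) ≃g subdividedClaw h i j))

/-- The graph `2P_1 + 2P_2`: vertices `0, 1` isolated, edges `23` and `45`. -/
def g2P1'2P2 : SimpleGraph (Fin 6) := SimpleGraph.fromEdgeSet {s(2, 3), s(4, 5)}

/-- The graph `2P_1 + P_4`: vertices `0, 1` isolated, path `2-3-4-5`. -/
def g2P1'P4 : SimpleGraph (Fin 6) :=
  SimpleGraph.fromEdgeSet {s(2, 3), s(3, 4), s(4, 5)}

/-- The graph `4P_1 + P_2`: vertices `0, 1, 2, 3` isolated, edge `45`. -/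
def g4P1'P2 : SimpleGraph (Fin 6) := SimpleGraph.fromEdgeSet {s(4, 5)}

/-- The graph `3P_2`: three disjoint edges `01`, `23`, `45`. -/
def g3P2 : SimpleGraph (Fin 6) :=
  SimpleGraph.fromEdgeSet {s(0, 1), s(2, 3), s(4, 5)}

/-- The graph `2P_3`: two disjoint paths `0-1-2` and `3-4-5`. -/
def g2P3 : SimpleGraph (Fin 6) :=
  SimpleGraph.fromEdgeSet {s(0, 1), s(1, 2), s(3, 4), s(4, 5)}

/-- The graph `K_{1,3} + 3P_1`: a claw with centre `0` and leaves `1, 2, 3`,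
plus isolated vertices `4, 5, 6`. -/
def gK13'3P1 : SimpleGraph (Fin 7) :=
  SimpleGraph.fromEdgeSet {s(0, 1), s(0, 2), s(0, 3)}

/-- The graph `K_{1,3} + P_2`: a claw with centre `0` and leaves `1, 2, 3`,
plus the edge `45`. -/
def gK13'P2 : SimpleGraph (Fin 6) :=
  SimpleGraph.fromEdgeSet {s(0, 1), s(0, 2), s(0, 3), s(4, 5)}

/-- The graph `P_1 + S_{1,1,3}`: an isolated vertex `0`, plus a subdivided claw with
centre `1`, two leaves `2, 3` at distance one and the path `1-4-5-6`. -/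
def gP1'S113 : SimpleGraph (Fin 7) :=
  SimpleGraph.fromEdgeSet {s(1, 2), s(1, 3), s(1, 4), s(4, 5), s(5, 6)}

/-- The graph `S_{1,2,3}`. -/
def gS123 : SimpleGraph (Fin 7) := subdividedClaw 1 2 3


section Infra

variable {V : Type*} {H : SimpleGraph V}

/-- A vertex adjacent to nothing. -/
def Isolated (H : SimpleGraph V) (v : V) : Prop := ∀ w, ¬ H.Adj v w

/-- Disjoint union of two simple graphs. -/
def sumG {α β : Type*} (A : SimpleGraph α) (B : SimpleGraph β) : SimpleGraph (α ⊕ β) where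
  Adj x y := match x, y with
    | Sum.inl a, Sum.inl b => A.Adj a b
    | Sum.inr a, Sum.inr b => B.Adj a b
    | _, _ => False
  symm := by
    constructor
    rintro (a|a) (b|b) hab <;>
      first | exact A.adj_symm hab | exact B.adj_symm hab | exact hab.elim
  loopless := by
    constructor
    rintro (a|a) ha <;> first | exact A.irrefl ha | exact B.irrefl ha

instance sumG.decidableRel {α β : Type*} (A : SimpleGraph α) (B : SimpleGraph β)
    [DecidableRel A.Adj] [DecidableRel B.Adj] : DecidableRel (sumG A B).Adj
  | Sum.inl a, Sum.inl b => inferInstanceAs (Decidable (A.Adj a b))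
  | Sum.inl _, Sum.inr _ => isFalse (fun h => h)
  | Sum.inr _, Sum.inl _ => isFalse (fun h => h)
  | Sum.inr a, Sum.inr b => inferInstanceAs (Decidable (B.Adj a b))

lemma subClaw_adj {h i j : ℕ} (a b : Fin (h+i+j+1)) :
    (subdividedClaw h i j).Adj a b ↔ a.val ≠ b.val ∧
      (((a.val = 0 ∧ (b.val = 1 ∨ b.val = h + 1 ∨ b.val = h + i + 1)) ∨
        (1 ≤ a.val ∧ b.val = a.val + 1 ∧ (b.val ≤ h ∨ (h + 1 ≤ a.val ∧ b.val ≤ h + i) ∨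
          (h + i + 1 ≤ a.val ∧ b.val ≤ h + i + j)))) ∨
       ((b.val = 0 ∧ (a.val = 1 ∨ a.val = h + 1 ∨ a.val = h + i + 1)) ∨
        (1 ≤ b.val ∧ a.val = b.val + 1 ∧ (a.val ≤ h ∨ (h + 1 ≤ b.val ∧ a.val ≤ h + i) ∨
          (h + i + 1 ≤ b.val ∧ a.val ≤ h + i + j))))) := by
  rw [subdividedClaw, SimpleGraph.fromRel_adj, Ne, Ne, Fin.ext_iff]

instance subClaw.decidableRel {h i j : ℕ} : DecidableRel (subdividedClaw h i j).Adj :=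
  fun a b => decidable_of_iff _ (subClaw_adj a b).symm

instance pathGraph.decidableRel {n : ℕ} : DecidableRel (SimpleGraph.pathGraph n).Adj :=
  fun a b => decidable_of_iff _ SimpleGraph.pathGraph_adj.symm

instance botGraph.decidableRel {α : Type*} : DecidableRel (⊥ : SimpleGraph α).Adj :=
  fun _ _ => isFalse (fun h => h)

instance : DecidableRel g2P1'2P2.Adj := fun a b =>
  decidable_of_iff ((s(a,b) = s(2,3) ∨ s(a,b) = s(4,5)) ∧ a ≠ b)
    (by rw [g2P1'2P2, SimpleGraph.fromEdgeSet_adj]; simp [Set.mem_insert_iff])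

instance : DecidableRel g2P1'P4.Adj := fun a b =>
  decidable_of_iff ((s(a,b) = s(2,3) ∨ s(a,b) = s(3,4) ∨ s(a,b) = s(4,5)) ∧ a ≠ b)
    (by rw [g2P1'P4, SimpleGraph.fromEdgeSet_adj]; simp [Set.mem_insert_iff])

instance : DecidableRel g4P1'P2.Adj := fun a b =>
  decidable_of_iff ((s(a,b) = s(4,5)) ∧ a ≠ b)
    (by rw [g4P1'P2, SimpleGraph.fromEdgeSet_adj]; simp [Set.mem_insert_iff])

instance : DecidableRel g3P2.Adj := fun a b =>
  decidable_of_iff ((s(a,b) = s(0,1) ∨ s(a,b) = s(2,3) ∨ s(a,b) = s(4,5)) ∧ a ≠ b)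
    (by rw [g3P2, SimpleGraph.fromEdgeSet_adj]; simp [Set.mem_insert_iff])

instance : DecidableRel g2P3.Adj := fun a b =>
  decidable_of_iff ((s(a,b) = s(0,1) ∨ s(a,b) = s(1,2) ∨ s(a,b) = s(3,4) ∨ s(a,b) = s(4,5)) ∧ a ≠ b)
    (by rw [g2P3, SimpleGraph.fromEdgeSet_adj]; simp [Set.mem_insert_iff])

instance : DecidableRel gK13'3P1.Adj := fun a b =>
  decidable_of_iff ((s(a,b) = s(0,1) ∨ s(a,b) = s(0,2) ∨ s(a,b) = s(0,3)) ∧ a ≠ b)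
    (by rw [gK13'3P1, SimpleGraph.fromEdgeSet_adj]; simp [Set.mem_insert_iff])

instance : DecidableRel gK13'P2.Adj := fun a b =>
  decidable_of_iff ((s(a,b) = s(0,1) ∨ s(a,b) = s(0,2) ∨ s(a,b) = s(0,3) ∨ s(a,b) = s(4,5)) ∧ a ≠ b)
    (by rw [gK13'P2, SimpleGraph.fromEdgeSet_adj]; simp [Set.mem_insert_iff])

instance : DecidableRel gP1'S113.Adj := fun a b =>
  decidable_of_iff ((s(a,b) = s(1,2) ∨ s(a,b) = s(1,3) ∨ s(a,b) = s(1,4) ∨ s(a,b) = s(4,5) ∨ s(a,b) = s(5,6)) ∧ a ≠ b)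
    (by rw [gP1'S113, SimpleGraph.fromEdgeSet_adj]; simp [Set.mem_insert_iff])

instance : DecidableRel gS123.Adj := by rw [gS123]; infer_instance

/-- Build an embedding of simple graphs from raw data. -/
def mkEmb {α β : Type*} (G : SimpleGraph α) (G' : SimpleGraph β) (f : α → β)
    (h1 : Function.Injective f) (h2 : ∀ a b, G.Adj a b ↔ G'.Adj (f a) (f b)) : G ↪g G' :=
  ⟨⟨f, h1⟩, fun {a b} => (h2 a b).symm⟩

lemma HFree.elim' {W : Type*} {X : SimpleGraph (Fin 6)} {A : SimpleGraph W}
    (hf : HFree H X) (e : A ↪g H)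
    (hc : ∃ f : Fin 6 → W, Function.Injective f ∧ ∀ u v, X.Adj u v ↔ A.Adj (f u) (f v)) :
    False := by
  obtain ⟨f, h1, h2⟩ := hc
  exact hf ⟨e ∘ f, e.injective.comp h1, fun u v => (h2 u v).trans e.map_rel_iff.symm⟩

lemma HFree.mono {W F : Type*} {G : SimpleGraph W} {X : SimpleGraph F}
    (e : H ↪g G) (hf : HFree G X) : HFree H X := by
  rintro ⟨f, h1, h2⟩
  exact hf ⟨e ∘ f, e.injective.comp h1, fun u v => (h2 u v).trans e.map_rel_iff.symm⟩

lemma hfree_of_noedge (hne : ∀ u v, ¬H.Adj u v) {F : Type*} {X : SimpleGraph F}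
    (hX : ∃ a b, X.Adj a b) : HFree H X := by
  rintro ⟨f, _, hiff⟩
  obtain ⟨a, b, hab⟩ := hX
  exact hne _ _ ((hiff a b).mp hab)

/-- Glue two embeddings with unreachable images into an embedding of the disjoint union. -/
def glue {α β : Type*} {A : SimpleGraph α} {B : SimpleGraph β} (eA : A ↪g H) (eB : B ↪g H)
    (hsep : ∀ a b, ¬ H.Reachable (eA a) (eB b)) : sumG A B ↪g H := by
  refine mkEmb _ _ (Sum.elim eA eB) ?_ ?_
  · rintro (a|a) (b|b) hab <;> simp only [Sum.elim_inl, Sum.elim_inr] at hab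
    · exact congrArg Sum.inl (eA.injective hab)
    · exact absurd (show H.Reachable (eA a) (eB b) by
        rw [hab]) (hsep a b)
    · exact absurd (show H.Reachable (eA b) (eB a) by
        rw [← hab]) (hsep b a)
    · exact congrArg Sum.inr (eB.injective hab)
  · rintro (a|a) (b|b) <;> simp only [Sum.elim_inl, Sum.elim_inr]
    · exact eA.map_rel_iff.symm
    · exact iff_of_false (fun h => h) (fun h => hsep a b h.reachable)
    · exact iff_of_false (fun h => h) (fun h => hsep b a h.symm.reachable)
    · exact eB.map_rel_iff.symm

lemma isolated_not_reach {v u : V} (hv : Isolated H v) (h : H.Reachable v u) : v = u := by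
  obtain ⟨w⟩ := h
  cases w with
  | nil => rfl
  | cons h p => exact absurd h (hv _)

lemma comp_eq_of_adj {u v : V} (h : H.Adj u v) :
    H.connectedComponentMk u = H.connectedComponentMk v :=
  SimpleGraph.ConnectedComponent.sound h.reachable

lemma sep_mem {c c' : H.ConnectedComponent} {a b : V} (hcc : c ≠ c')
    (ha : a ∈ c.supp) (hb : b ∈ c'.supp) : ¬H.Reachable a b := fun hr => by
  rw [SimpleGraph.ConnectedComponent.mem_supp_iff] at ha hb
  exact hcc (ha ▸ hb ▸ SimpleGraph.ConnectedComponent.sound hr)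

lemma sep_isol_mem {c : H.ConnectedComponent} {v x y b : V} (hv : Isolated H v)
    (hxy : H.Adj x y) (hx : x ∈ c.supp) (hb : b ∈ c.supp) : ¬H.Reachable v b := by
  intro hr
  have hvb : v = b := isolated_not_reach hv hr
  subst hvb
  rw [SimpleGraph.ConnectedComponent.mem_supp_iff] at hx hb
  have hvx : v = x := isolated_not_reach hv (SimpleGraph.ConnectedComponent.exact (hb.trans hx.symm))
  exact hv y (hvx ▸ hxy)

/-- The embedding of the pattern of a component into the whole graph. -/
def compEmb {n : ℕ} {c : H.ConnectedComponent} {A : SimpleGraph (Fin n)}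
    (φ : H.induce c.supp ≃g A) : A ↪g H :=
  (SimpleGraph.Embedding.induce c.supp).comp φ.symm.toEmbedding

lemma compEmb_mem {n : ℕ} {c : H.ConnectedComponent} {A : SimpleGraph (Fin n)}
    (φ : H.induce c.supp ≃g A) (a : Fin n) : compEmb φ a ∈ c.supp :=
  (φ.symm a).2

/-- The edge of a component given by the pattern. -/
lemma compEmb_adj {n : ℕ} {c : H.ConnectedComponent} {A : SimpleGraph (Fin n)}
    (φ : H.induce c.supp ≃g A) {a b : Fin n} (hab : A.Adj a b) :
    H.Adj (compEmb φ a) (compEmb φ b) := (compEmb φ).map_rel_iff.mpr hab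

/-- Embedding a single edge as a path on two vertices. -/
def edgeEmb {x y : V} (h : H.Adj x y) : SimpleGraph.pathGraph 2 ↪g H := by
  refine mkEmb _ _ (fun k => if k = 0 then x else y) ?_ ?_
  · intro a b hab
    fin_cases a <;> fin_cases b <;> simp_all <;>
      first | rfl | exact absurd hab h.ne | exact absurd hab h.ne'
  · intro a b
    fin_cases a <;> fin_cases b <;> norm_num <;>
      first
      | exact iff_of_false (by decide) (H.loopless _)
      | exact iff_of_true (by decide) h
      | exact iff_of_true (by decide) h.symm

lemma edgeEmb_mk {x y : V} (h : H.Adj x y) (k : Fin 2) :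
    H.connectedComponentMk (edgeEmb h k) = H.connectedComponentMk x := by
  fin_cases k
  · rfl
  · exact (comp_eq_of_adj h).symm

/-- Embedding a family of isolated vertices. -/
def isolEmb {k : ℕ} (g : Fin k ↪ V) (hg : ∀ t, Isolated H (g t)) :
    (⊥ : SimpleGraph (Fin k)) ↪g H :=
  mkEmb _ _ g g.injective (fun a b => iff_of_false (fun h => h) (hg a (g b)))

/-- Embedding a set of isolated vertices into an edgeless graph. -/
def restEmb {k : ℕ} (s : Set V) (hiso : ∀ v ∈ s, Isolated H v) (g : ↥s ↪ Fin k) :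
    H.induce s ↪g (⊥ : SimpleGraph (Fin k)) :=
  mkEmb _ _ g g.injective
    (fun a b => iff_of_false (fun had => hiso a.1 a.2 b.1 had) (fun h => h))

def emptyEmb {α β : Type*} [IsEmpty α] (G : SimpleGraph α) (B : SimpleGraph β) : G ↪g B :=
  mkEmb _ _ isEmptyElim (fun a => isEmptyElim a) (fun a => isEmptyElim a)

end Infra

lemma copy_g3P2 {W : Type*} {A : SimpleGraph W} {v0 v1 v2 v3 v4 v5 : W}
    (p01 : A.Adj v0 v1) (n02 : ¬A.Adj v0 v2) (n03 : ¬A.Adj v0 v3) (n04 : ¬A.Adj v0 v4) (n05 : ¬A.Adj v0 v5)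
    (n12 : ¬A.Adj v1 v2) (n13 : ¬A.Adj v1 v3) (n14 : ¬A.Adj v1 v4) (n15 : ¬A.Adj v1 v5) (p23 : A.Adj v2 v3)
    (n24 : ¬A.Adj v2 v4) (n25 : ¬A.Adj v2 v5) (n34 : ¬A.Adj v3 v4) (n35 : ¬A.Adj v3 v5) (p45 : A.Adj v4 v5)
    (d01 : v0 ≠ v1) (d02 : v0 ≠ v2) (d03 : v0 ≠ v3) (d04 : v0 ≠ v4) (d05 : v0 ≠ v5)
    (d12 : v1 ≠ v2) (d13 : v1 ≠ v3) (d14 : v1 ≠ v4) (d15 : v1 ≠ v5) (d23 : v2 ≠ v3)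
    (d24 : v2 ≠ v4) (d25 : v2 ≠ v5) (d34 : v3 ≠ v4) (d35 : v3 ≠ v5) (d45 : v4 ≠ v5) :
    ∃ f : Fin 6 → W, Function.Injective f ∧ ∀ u v, g3P2.Adj u v ↔ A.Adj (f u) (f v) := by
  refine ⟨fun k => if k = 0 then v0 else if k = 1 then v1 else if k = 2 then v2
    else if k = 3 then v3 else if k = 4 then v4 else v5, ?_, ?_⟩
  · intro a b hab
    fin_cases a <;> fin_cases b <;> simp_all
  · intro u v
    fin_cases u <;> fin_cases v <;> norm_num <;>
      first
      | exact iff_of_true (by decide) (by assumption)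
      | exact iff_of_true (by decide) (by exact (by assumption : A.Adj _ _).symm)
      | exact iff_of_false (by decide) (by assumption)
      | exact iff_of_false (by decide) (fun hh => (by assumption : ¬ A.Adj _ _) hh.symm)
      | exact iff_of_false (by decide) (A.loopless _)

lemma copy_g2P3 {W : Type*} {A : SimpleGraph W} {v0 v1 v2 v3 v4 v5 : W}
    (p01 : A.Adj v0 v1) (n02 : ¬A.Adj v0 v2) (n03 : ¬A.Adj v0 v3) (n04 : ¬A.Adj v0 v4) (n05 : ¬A.Adj v0 v5)
    (p12 : A.Adj v1 v2) (n13 : ¬A.Adj v1 v3) (n14 : ¬A.Adj v1 v4) (n15 : ¬A.Adj v1 v5) (n23 : ¬A.Adj v2 v3)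
    (n24 : ¬A.Adj v2 v4) (n25 : ¬A.Adj v2 v5) (p34 : A.Adj v3 v4) (n35 : ¬A.Adj v3 v5) (p45 : A.Adj v4 v5)
    (d01 : v0 ≠ v1) (d02 : v0 ≠ v2) (d03 : v0 ≠ v3) (d04 : v0 ≠ v4) (d05 : v0 ≠ v5)
    (d12 : v1 ≠ v2) (d13 : v1 ≠ v3) (d14 : v1 ≠ v4) (d15 : v1 ≠ v5) (d23 : v2 ≠ v3)
    (d24 : v2 ≠ v4) (d25 : v2 ≠ v5) (d34 : v3 ≠ v4) (d35 : v3 ≠ v5) (d45 : v4 ≠ v5) :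
    ∃ f : Fin 6 → W, Function.Injective f ∧ ∀ u v, g2P3.Adj u v ↔ A.Adj (f u) (f v) := by
  refine ⟨fun k => if k = 0 then v0 else if k = 1 then v1 else if k = 2 then v2
    else if k = 3 then v3 else if k = 4 then v4 else v5, ?_, ?_⟩
  · intro a b hab
    fin_cases a <;> fin_cases b <;> simp_all
  · intro u v
    fin_cases u <;> fin_cases v <;> norm_num <;>
      first
      | exact iff_of_true (by decide) (by assumption)
      | exact iff_of_true (by decide) (by exact (by assumption : A.Adj _ _).symm)
      | exact iff_of_false (by decide) (by assumption)
      | exact iff_of_false (by decide) (fun hh => (by assumption : ¬ A.Adj _ _) hh.symm)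
      | exact iff_of_false (by decide) (A.loopless _)


lemma claw_excl_A {h i j : ℕ} (h1 : 1 ≤ h) (h2 : 1 ≤ i) (h4 : 4 ≤ j) :
    ∃ f : Fin 6 → Fin (h+i+j+1), Function.Injective f ∧
      ∀ u v, g2P3.Adj u v ↔ (subdividedClaw h i j).Adj (f u) (f v) := by
  apply copy_g2P3 (A := subdividedClaw h i j) (v0 := ⟨1, by omega⟩) (v1 := ⟨0, by omega⟩)
    (v2 := ⟨h+1, by omega⟩) (v3 := ⟨h+i+j-2, by omega⟩) (v4 := ⟨h+i+j-1, by omega⟩)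
    (v5 := ⟨h+i+j, by omega⟩) <;>
    first
      | (rw [subClaw_adj]; dsimp only; omega)
      | (rw [Ne, Fin.ext_iff]; dsimp only; omega)

lemma claw_excl_B {h i j : ℕ} (h1 : 2 ≤ h) (h2 : 2 ≤ i) (h4 : 2 ≤ j) :
    ∃ f : Fin 6 → Fin (h+i+j+1), Function.Injective f ∧
      ∀ u v, g3P2.Adj u v ↔ (subdividedClaw h i j).Adj (f u) (f v) := by
  apply copy_g3P2 (A := subdividedClaw h i j) (v0 := ⟨h-1, by omega⟩) (v1 := ⟨h, by omega⟩)
    (v2 := ⟨h+i-1, by omega⟩) (v3 := ⟨h+i, by omega⟩) (v4 := ⟨h+i+j-1, by omega⟩)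
    (v5 := ⟨h+i+j, by omega⟩) <;>
    first
      | (rw [subClaw_adj]; dsimp only; omega)
      | (rw [Ne, Fin.ext_iff]; dsimp only; omega)

lemma claw_excl_C {h i j : ℕ} (h1 : 1 ≤ h) (h2 : 3 ≤ i) (h4 : 3 ≤ j) :
    ∃ f : Fin 6 → Fin (h+i+j+1), Function.Injective f ∧
      ∀ u v, g3P2.Adj u v ↔ (subdividedClaw h i j).Adj (f u) (f v) := by
  apply copy_g3P2 (A := subdividedClaw h i j) (v0 := ⟨0, by omega⟩) (v1 := ⟨1, by omega⟩)
    (v2 := ⟨h+i-1, by omega⟩) (v3 := ⟨h+i, by omega⟩) (v4 := ⟨h+i+j-1, by omega⟩)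
    (v5 := ⟨h+i+j, by omega⟩) <;>
    first
      | (rw [subClaw_adj]; dsimp only; omega)
      | (rw [Ne, Fin.ext_iff]; dsimp only; omega)

lemma path_excl {r : ℕ} (h7 : 7 ≤ r) :
    ∃ f : Fin 6 → Fin r, Function.Injective f ∧
      ∀ u v, g2P3.Adj u v ↔ (SimpleGraph.pathGraph r).Adj (f u) (f v) := by
  apply copy_g2P3 (A := SimpleGraph.pathGraph r) (v0 := ⟨0, by omega⟩) (v1 := ⟨1, by omega⟩)
    (v2 := ⟨2, by omega⟩) (v3 := ⟨4, by omega⟩) (v4 := ⟨5, by omega⟩) (v5 := ⟨6, by omega⟩) <;>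
    first
      | (rw [SimpleGraph.pathGraph_adj]; dsimp only; omega)
      | (rw [Ne, Fin.ext_iff]; dsimp only; omega)

lemma hfree_pairs {W : Type*} (T : SimpleGraph W) (X : SimpleGraph (Fin 6))
    (h : ¬ ∃ a0 a1 : W, ((X.Adj 0 1 ↔ T.Adj a0 a1) ∧ a0 ≠ a1) ∧
      ∃ a2 : W, ((X.Adj 0 2 ↔ T.Adj a0 a2) ∧ (X.Adj 1 2 ↔ T.Adj a1 a2) ∧ a0 ≠ a2 ∧ a1 ≠ a2) ∧
      ∃ a3 : W, ((X.Adj 0 3 ↔ T.Adj a0 a3) ∧ (X.Adj 1 3 ↔ T.Adj a1 a3) ∧ (X.Adj 2 3 ↔ T.Adj a2 a3) ∧ a0 ≠ a3 ∧ a1 ≠ a3 ∧ a2 ≠ a3) ∧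
      ∃ a4 : W, ((X.Adj 0 4 ↔ T.Adj a0 a4) ∧ (X.Adj 1 4 ↔ T.Adj a1 a4) ∧ (X.Adj 2 4 ↔ T.Adj a2 a4) ∧ (X.Adj 3 4 ↔ T.Adj a3 a4) ∧ a0 ≠ a4 ∧ a1 ≠ a4 ∧ a2 ≠ a4 ∧ a3 ≠ a4) ∧
      ∃ a5 : W, ((X.Adj 0 5 ↔ T.Adj a0 a5) ∧ (X.Adj 1 5 ↔ T.Adj a1 a5) ∧ (X.Adj 2 5 ↔ T.Adj a2 a5) ∧ (X.Adj 3 5 ↔ T.Adj a3 a5) ∧ (X.Adj 4 5 ↔ T.Adj a4 a5) ∧ a0 ≠ a5 ∧ a1 ≠ a5 ∧ a2 ≠ a5 ∧ a3 ≠ a5 ∧ a4 ≠ a5)) :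
    HFree T X := by
  rintro ⟨f, hinj, hadj⟩
  refine h ⟨f 0, f 1, ⟨hadj 0 1, fun e => absurd (hinj e) (by decide)⟩,
    f 2, ⟨hadj 0 2, hadj 1 2, fun e => absurd (hinj e) (by decide), fun e => absurd (hinj e) (by decide)⟩,
    f 3, ⟨hadj 0 3, hadj 1 3, hadj 2 3, fun e => absurd (hinj e) (by decide), fun e => absurd (hinj e) (by decide), fun e => absurd (hinj e) (by decide)⟩,
    f 4, ⟨hadj 0 4, hadj 1 4, hadj 2 4, hadj 3 4, fun e => absurd (hinj e) (by decide), fun e => absurd (hinj e) (by decide), fun e => absurd (hinj e) (by decide), fun e => absurd (hinj e) (by decide)⟩,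
    f 5, ⟨hadj 0 5, hadj 1 5, hadj 2 5, hadj 3 5, hadj 4 5, fun e => absurd (hinj e) (by decide), fun e => absurd (hinj e) (by decide), fun e => absurd (hinj e) (by decide), fun e => absurd (hinj e) (by decide), fun e => absurd (hinj e) (by decide)⟩⟩


set_option maxHeartbeats 1000000 in
set_option synthInstance.maxSize 4000 in
set_option synthInstance.maxHeartbeats 1000000 in
lemma free_0_0 : HFree gK13'3P1 g2P1'2P2 := hfree_pairs gK13'3P1 g2P1'2P2 (by decide)

set_option maxHeartbeats 1000000 in
set_option synthInstance.maxSize 4000 in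
set_option synthInstance.maxHeartbeats 1000000 in
lemma free_0_1 : HFree gK13'3P1 g2P1'P4 := hfree_pairs gK13'3P1 g2P1'P4 (by decide)

set_option maxHeartbeats 1000000 in
set_option synthInstance.maxSize 4000 in
set_option synthInstance.maxHeartbeats 1000000 in
lemma free_0_2 : HFree gK13'3P1 g4P1'P2 := hfree_pairs gK13'3P1 g4P1'P2 (by decide)

set_option maxHeartbeats 1000000 in
set_option synthInstance.maxSize 4000 in
set_option synthInstance.maxHeartbeats 1000000 in
lemma free_0_3 : HFree gK13'3P1 g3P2 := hfree_pairs gK13'3P1 g3P2 (by decide)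

set_option maxHeartbeats 1000000 in
set_option synthInstance.maxSize 4000 in
set_option synthInstance.maxHeartbeats 1000000 in
lemma free_0_4 : HFree gK13'3P1 g2P3 := hfree_pairs gK13'3P1 g2P3 (by decide)

set_option maxHeartbeats 1000000 in
set_option synthInstance.maxSize 4000 in
set_option synthInstance.maxHeartbeats 1000000 in
lemma free_1_0 : HFree gK13'P2 g2P1'2P2 := hfree_pairs gK13'P2 g2P1'2P2 (by decide)

set_option maxHeartbeats 1000000 in
set_option synthInstance.maxSize 4000 in
set_option synthInstance.maxHeartbeats 1000000 in
lemma free_1_1 : HFree gK13'P2 g2P1'P4 := hfree_pairs gK13'P2 g2P1'P4 (by decide)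

set_option maxHeartbeats 1000000 in
set_option synthInstance.maxSize 4000 in
set_option synthInstance.maxHeartbeats 1000000 in
lemma free_1_2 : HFree gK13'P2 g4P1'P2 := hfree_pairs gK13'P2 g4P1'P2 (by decide)

set_option maxHeartbeats 1000000 in
set_option synthInstance.maxSize 4000 in
set_option synthInstance.maxHeartbeats 1000000 in
lemma free_1_3 : HFree gK13'P2 g3P2 := hfree_pairs gK13'P2 g3P2 (by decide)

set_option maxHeartbeats 1000000 in
set_option synthInstance.maxSize 4000 in
set_option synthInstance.maxHeartbeats 1000000 in
lemma free_1_4 : HFree gK13'P2 g2P3 := hfree_pairs gK13'P2 g2P3 (by decide)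

set_option maxHeartbeats 1000000 in
set_option synthInstance.maxSize 4000 in
set_option synthInstance.maxHeartbeats 1000000 in
lemma free_2_0 : HFree gP1'S113 g2P1'2P2 := hfree_pairs gP1'S113 g2P1'2P2 (by decide)

set_option maxHeartbeats 1000000 in
set_option synthInstance.maxSize 4000 in
set_option synthInstance.maxHeartbeats 1000000 in
lemma free_2_1 : HFree gP1'S113 g2P1'P4 := hfree_pairs gP1'S113 g2P1'P4 (by decide)

set_option maxHeartbeats 1000000 in
set_option synthInstance.maxSize 4000 in
set_option synthInstance.maxHeartbeats 1000000 in
lemma free_2_2 : HFree gP1'S113 g4P1'P2 := hfree_pairs gP1'S113 g4P1'P2 (by decide)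

set_option maxHeartbeats 1000000 in
set_option synthInstance.maxSize 4000 in
set_option synthInstance.maxHeartbeats 1000000 in
lemma free_2_3 : HFree gP1'S113 g3P2 := hfree_pairs gP1'S113 g3P2 (by decide)

set_option maxHeartbeats 1000000 in
set_option synthInstance.maxSize 4000 in
set_option synthInstance.maxHeartbeats 1000000 in
lemma free_2_4 : HFree gP1'S113 g2P3 := hfree_pairs gP1'S113 g2P3 (by decide)

set_option maxHeartbeats 1000000 in
set_option synthInstance.maxSize 4000 in
set_option synthInstance.maxHeartbeats 1000000 in
lemma free_3_0 : HFree gS123 g2P1'2P2 := hfree_pairs gS123 g2P1'2P2 (by decide)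

set_option maxHeartbeats 1000000 in
set_option synthInstance.maxSize 4000 in
set_option synthInstance.maxHeartbeats 1000000 in
lemma free_3_1 : HFree gS123 g2P1'P4 := hfree_pairs gS123 g2P1'P4 (by decide)

set_option maxHeartbeats 1000000 in
set_option synthInstance.maxSize 4000 in
set_option synthInstance.maxHeartbeats 1000000 in
lemma free_3_2 : HFree gS123 g4P1'P2 := hfree_pairs gS123 g4P1'P2 (by decide)

set_option maxHeartbeats 1000000 in
set_option synthInstance.maxSize 4000 in
set_option synthInstance.maxHeartbeats 1000000 in
lemma free_3_3 : HFree gS123 g3P2 := hfree_pairs gS123 g3P2 (by decide)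

set_option maxHeartbeats 1000000 in
set_option synthInstance.maxSize 4000 in
set_option synthInstance.maxHeartbeats 1000000 in
lemma free_3_4 : HFree gS123 g2P3 := hfree_pairs gS123 g2P3 (by decide)

/-- The possible shapes of a component (containing an edge) of a graph in `S`
which is free of the five forbidden graphs. -/
def ShapeD {V : Type*} (H : SimpleGraph V) (c : H.ConnectedComponent) : Prop :=
  Nonempty (H.induce c.supp ≃g SimpleGraph.pathGraph 2) ∨
  Nonempty (H.induce c.supp ≃g SimpleGraph.pathGraph 3) ∨
  Nonempty (H.induce c.supp ≃g SimpleGraph.pathGraph 4) ∨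
  Nonempty (H.induce c.supp ≃g SimpleGraph.pathGraph 5) ∨
  Nonempty (H.induce c.supp ≃g SimpleGraph.pathGraph 6) ∨
  Nonempty (H.induce c.supp ≃g subdividedClaw 1 1 1) ∨
  Nonempty (H.induce c.supp ≃g subdividedClaw 1 1 2) ∨
  Nonempty (H.induce c.supp ≃g subdividedClaw 1 1 3) ∨
  Nonempty (H.induce c.supp ≃g subdividedClaw 1 2 2) ∨
  Nonempty (H.induce c.supp ≃g subdividedClaw 1 2 3)

lemma shape {V : Type*} {H : SimpleGraph V} (hS : InClassS H)
    (f4 : HFree H g3P2) (f5 : HFree H g2P3)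
    (c : H.ConnectedComponent) {x y : V} (hxy : H.Adj x y) (hx : x ∈ c.supp) :
    ShapeD H c := by
  have hy : y ∈ c.supp := by
    rw [SimpleGraph.ConnectedComponent.mem_supp_iff] at hx ⊢
    rw [← comp_eq_of_adj hxy, hx]
  rcases hS c with ⟨r, hr1, ⟨φ⟩⟩ | ⟨h, i, j, h1, h2, h3, ⟨φ⟩⟩
  · -- a path
    have h2r : 2 ≤ r := by
      have hne : (φ ⟨x, hx⟩) ≠ (φ ⟨y, hy⟩) := fun e => by
        have := congrArg Subtype.val (φ.injective e)
        exact hxy.ne this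
      have h1 := (φ ⟨x, hx⟩).isLt
      have h2 := (φ ⟨y, hy⟩).isLt
      have h3 : (φ ⟨x, hx⟩).val ≠ (φ ⟨y, hy⟩).val := fun e => hne (Fin.ext e)
      omega
    have h6r : r ≤ 6 := by
      by_contra h7
      exact HFree.elim' f5 (compEmb φ) (path_excl (by omega))
    unfold ShapeD
    interval_cases r
    · exact Or.inl ⟨φ⟩
    · exact Or.inr (Or.inl ⟨φ⟩)
    · exact Or.inr (Or.inr (Or.inl ⟨φ⟩))
    · exact Or.inr (Or.inr (Or.inr (Or.inl ⟨φ⟩)))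
    · exact Or.inr (Or.inr (Or.inr (Or.inr (Or.inl ⟨φ⟩))))
  · -- a subdivided claw
    have hj3 : j ≤ 3 := by
      by_contra h4
      exact HFree.elim' f5 (compEmb φ) (claw_excl_A h1 (h1.trans h2) (by omega))
    have hi2 : i ≤ 2 := by
      by_contra h4
      exact HFree.elim' f4 (compEmb φ) (claw_excl_C h1 (by omega) (by omega))
    have hh1 : h ≤ 1 := by
      by_contra h4
      exact HFree.elim' f4 (compEmb φ) (claw_excl_B (by omega) (by omega) (by omega))
    unfold ShapeD
    interval_cases h
    interval_cases i <;> interval_cases j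
    · exact Or.inr (Or.inr (Or.inr (Or.inr (Or.inr (Or.inl ⟨φ⟩)))))
    · exact Or.inr (Or.inr (Or.inr (Or.inr (Or.inr (Or.inr (Or.inl ⟨φ⟩))))))
    · exact Or.inr (Or.inr (Or.inr (Or.inr (Or.inr (Or.inr (Or.inr (Or.inl ⟨φ⟩)))))))
    · exact Or.inr (Or.inr (Or.inr (Or.inr (Or.inr (Or.inr (Or.inr (Or.inr (Or.inl ⟨φ⟩))))))))
    · exact Or.inr (Or.inr (Or.inr (Or.inr (Or.inr (Or.inr (Or.inr (Or.inr (Or.inr ⟨φ⟩))))))))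

noncomputable def glueCover3 {V : Type*} (H : SimpleGraph V) {α β γ : Type*}
    {A : SimpleGraph α} {B : SimpleGraph β} {C : SimpleGraph γ}
    (s t r : Set V)
    (hU : ∀ v, v ∈ s ∨ v ∈ t ∨ v ∈ r)
    (hst : ∀ u v, u ∈ s → v ∈ t → ¬H.Adj u v)
    (hsr : ∀ u v, u ∈ s → v ∈ r → ¬H.Adj u v)
    (htr : ∀ u v, u ∈ t → v ∈ r → ¬H.Adj u v)
    (eA : H.induce s ↪g A) (eB : H.induce t ↪g B) (eC : H.induce r ↪g C) :
    H ↪g sumG A (sumG B C) := by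
  classical
  refine mkEmb _ _ (fun v => if hs : v ∈ s then Sum.inl (eA ⟨v, hs⟩)
    else if ht : v ∈ t then Sum.inr (Sum.inl (eB ⟨v, ht⟩))
    else Sum.inr (Sum.inr (eC ⟨v, ((hU v).resolve_left hs).resolve_left ht⟩))) ?_ ?_
  · intro u v huv
    dsimp only at huv
    split_ifs at huv <;>
      first
      | exact congrArg Subtype.val (eA.injective (Sum.inl_injective huv))
      | exact congrArg Subtype.val (eB.injective (Sum.inl_injective (Sum.inr_injective huv)))
      | exact congrArg Subtype.val (eC.injective (Sum.inr_injective (Sum.inr_injective huv)))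
      | exact absurd huv (by simp)
  · intro u v
    split_ifs with h1 h2 h3 h4 h5 h6 h7 h8
    · exact (eA.map_rel_iff (a := ⟨u, h1⟩) (b := ⟨v, h2⟩)).symm
    · exact iff_of_false (hst u v h1 h3) (fun h => h)
    · exact iff_of_false (hsr u v h1 (((hU v).resolve_left h2).resolve_left h3)) (fun h => h)
    · exact iff_of_false (fun h => hst v u h5 h4 h.symm) (fun h => h)
    · exact (eB.map_rel_iff (a := ⟨u, h4⟩) (b := ⟨v, h6⟩)).symm
    · exact iff_of_false (htr u v h4 (((hU v).resolve_left h5).resolve_left h6)) (fun h => h)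
    · exact iff_of_false (fun h => hsr v u h7 (((hU u).resolve_left h1).resolve_left h4) h.symm)
        (fun h => h)
    · exact iff_of_false (fun h => htr v u h8 (((hU u).resolve_left h1).resolve_left h4) h.symm)
        (fun h => h)
    · exact (eC.map_rel_iff (a := ⟨u, ((hU u).resolve_left h1).resolve_left h4⟩)
        (b := ⟨v, ((hU v).resolve_left h7).resolve_left h8⟩)).symm

lemma isolated_emb_or {V : Type*} [Fintype V] (s : Set V) (k : ℕ) :
    Nonempty (↥s ↪ Fin k) ∨ ∃ g : Fin (k+1) → V, Function.Injective g ∧ ∀ t, g t ∈ s := by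
  classical
  rcases le_or_gt (Fintype.card ↥s) k with hle | hlt
  · exact Or.inl (Function.Embedding.nonempty_of_card_le (by simpa using hle))
  · right
    obtain ⟨g⟩ := Function.Embedding.nonempty_of_card_le (α := Fin (k+1)) (β := ↥s)
      (by simpa using hlt)
    exact ⟨fun t => (g t).1, fun a b e => g.injective (Subtype.ext e), fun t => (g t).2⟩

lemma three_comp {V : Type*} {H : SimpleGraph V} (f4 : HFree H g3P2)
    {x1 y1 x2 y2 x3 y3 : V} (h1 : H.Adj x1 y1) (h2 : H.Adj x2 y2) (h3 : H.Adj x3 y3)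
    (h12 : H.connectedComponentMk x1 ≠ H.connectedComponentMk x2)
    (h13 : H.connectedComponentMk x1 ≠ H.connectedComponentMk x3)
    (h23 : H.connectedComponentMk x2 ≠ H.connectedComponentMk x3) : False := by
  have sep23 : ∀ a b, ¬ H.Reachable (edgeEmb h2 a) (edgeEmb h3 b) := fun a b hr =>
    h23 (by rw [← edgeEmb_mk h2 a, ← edgeEmb_mk h3 b]
            exact SimpleGraph.ConnectedComponent.sound hr)
  have sep123 : ∀ a b, ¬ H.Reachable (edgeEmb h1 a) ((glue (edgeEmb h2) (edgeEmb h3) sep23) b) := by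
    rintro a (b|b) hr
    · exact h12 (by rw [← edgeEmb_mk h1 a, ← edgeEmb_mk h2 b]
                    exact SimpleGraph.ConnectedComponent.sound hr)
    · exact h13 (by rw [← edgeEmb_mk h1 a, ← edgeEmb_mk h3 b]
                    exact SimpleGraph.ConnectedComponent.sound hr)
  exact HFree.elim' f4 (glue (edgeEmb h1) (glue (edgeEmb h2) (edgeEmb h3) sep23) sep123)
    ⟨![Sum.inl 0, Sum.inl 1, Sum.inr (Sum.inl 0), Sum.inr (Sum.inl 1),
       Sum.inr (Sum.inr 0), Sum.inr (Sum.inr 1)], by decide, by decide⟩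

lemma shape_p3 {V : Type*} {H : SimpleGraph V} {c : H.ConnectedComponent} (sh : ShapeD H c) :
    Nonempty (H.induce c.supp ≃g SimpleGraph.pathGraph 2) ∨
      Nonempty (SimpleGraph.pathGraph 3 ↪g H.induce c.supp) := by
  rcases sh with h | h | h | h | h | h | h | h | h | h
  · exact Or.inl h
  · obtain ⟨φ⟩ := h
    exact Or.inr ⟨φ.symm.toEmbedding.comp (mkEmb _ _ ![0,1,2] (by decide) (by decide))⟩
  · obtain ⟨φ⟩ := h
    exact Or.inr ⟨φ.symm.toEmbedding.comp (mkEmb _ _ ![0,1,2] (by decide) (by decide))⟩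
  · obtain ⟨φ⟩ := h
    exact Or.inr ⟨φ.symm.toEmbedding.comp (mkEmb _ _ ![0,1,2] (by decide) (by decide))⟩
  · obtain ⟨φ⟩ := h
    exact Or.inr ⟨φ.symm.toEmbedding.comp (mkEmb _ _ ![0,1,2] (by decide) (by decide))⟩
  · obtain ⟨φ⟩ := h
    exact Or.inr ⟨φ.symm.toEmbedding.comp (mkEmb _ _ ![1,0,2] (by decide) (by decide))⟩
  · obtain ⟨φ⟩ := h
    exact Or.inr ⟨φ.symm.toEmbedding.comp (mkEmb _ _ ![1,0,2] (by decide) (by decide))⟩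
  · obtain ⟨φ⟩ := h
    exact Or.inr ⟨φ.symm.toEmbedding.comp (mkEmb _ _ ![1,0,2] (by decide) (by decide))⟩
  · obtain ⟨φ⟩ := h
    exact Or.inr ⟨φ.symm.toEmbedding.comp (mkEmb _ _ ![1,0,2] (by decide) (by decide))⟩
  · obtain ⟨φ⟩ := h
    exact Or.inr ⟨φ.symm.toEmbedding.comp (mkEmb _ _ ![1,0,2] (by decide) (by decide))⟩

lemma two_p3 {V : Type*} {H : SimpleGraph V} (f5 : HFree H g2P3)
    {c1 c2 : H.ConnectedComponent} (hcc : c1 ≠ c2)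
    (e1 : SimpleGraph.pathGraph 3 ↪g H.induce c1.supp)
    (e2 : SimpleGraph.pathGraph 3 ↪g H.induce c2.supp) : False := by
  exact HFree.elim' f5 (glue ((SimpleGraph.Embedding.induce c1.supp).comp e1)
      ((SimpleGraph.Embedding.induce c2.supp).comp e2)
      (fun a b => sep_mem hcc (e1 a).2 (e2 b).2))
    ⟨![Sum.inl 0, Sum.inl 1, Sum.inl 2, Sum.inr 0, Sum.inr 1, Sum.inr 2], by decide, by decide⟩

lemma contra1 {V : Type*} {H : SimpleGraph V} {X : SimpleGraph (Fin 6)} (fX : HFree H X)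
    {n1 k : ℕ} {A : SimpleGraph (Fin n1)} {c1 : H.ConnectedComponent}
    (φ : H.induce c1.supp ≃g A) {a0 b0 : Fin n1} (hA : A.Adj a0 b0)
    (g : Fin k → V) (hginj : Function.Injective g) (hgiso : ∀ t, Isolated H (g t))
    (hc : ∃ f : Fin 6 → Fin n1 ⊕ Fin k, Function.Injective f ∧
       ∀ u v, X.Adj u v ↔ (sumG A (⊥ : SimpleGraph (Fin k))).Adj (f u) (f v)) : False := by
  have hedge := compEmb_adj φ hA
  have sep : ∀ a b, ¬ H.Reachable (compEmb φ a) ((isolEmb ⟨g, hginj⟩ hgiso) b) :=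
    fun a b hr => sep_isol_mem (hgiso b) hedge (compEmb_mem φ a0) (compEmb_mem φ a) hr.symm
  exact HFree.elim' fX (glue (compEmb φ) (isolEmb ⟨g, hginj⟩ hgiso) sep) hc

lemma contra2 {V : Type*} {H : SimpleGraph V} {X : SimpleGraph (Fin 6)} (fX : HFree H X)
    {n1 n2 k : ℕ} {A : SimpleGraph (Fin n1)} {B : SimpleGraph (Fin n2)}
    {c1 c2 : H.ConnectedComponent} (hcc : c1 ≠ c2)
    (φ : H.induce c1.supp ≃g A) (ψ : H.induce c2.supp ≃g B)
    {a0 b0 : Fin n1} (hA : A.Adj a0 b0) {a1 b1 : Fin n2} (hB : B.Adj a1 b1)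
    (g : Fin k → V) (hginj : Function.Injective g) (hgiso : ∀ t, Isolated H (g t))
    (hc : ∃ f : Fin 6 → Fin n1 ⊕ (Fin n2 ⊕ Fin k), Function.Injective f ∧
       ∀ u v, X.Adj u v ↔ (sumG A (sumG B (⊥ : SimpleGraph (Fin k)))).Adj (f u) (f v)) :
    False := by
  have sepBI : ∀ a b, ¬ H.Reachable (compEmb ψ a) ((isolEmb ⟨g, hginj⟩ hgiso) b) :=
    fun a b hr =>
      sep_isol_mem (hgiso b) (compEmb_adj ψ hB) (compEmb_mem ψ a1) (compEmb_mem ψ a) hr.symm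
  have sepA : ∀ a b, ¬ H.Reachable (compEmb φ a)
      ((glue (compEmb ψ) (isolEmb ⟨g, hginj⟩ hgiso) sepBI) b) := by
    rintro a (b|b) hr
    · exact sep_mem hcc (compEmb_mem φ a) (compEmb_mem ψ b) hr
    · exact sep_isol_mem (hgiso b) (compEmb_adj φ hA) (compEmb_mem φ a0) (compEmb_mem φ a) hr.symm
  exact HFree.elim' fX (glue (compEmb φ) (glue (compEmb ψ) (isolEmb ⟨g, hginj⟩ hgiso) sepBI) sepA) hc

lemma contra2e {V : Type*} {H : SimpleGraph V} {X : SimpleGraph (Fin 6)} (fX : HFree H X)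
    {n1 n2 : ℕ} {A : SimpleGraph (Fin n1)} {B : SimpleGraph (Fin n2)}
    {c1 c2 : H.ConnectedComponent} (hcc : c1 ≠ c2)
    (φ : H.induce c1.supp ≃g A) (ψ : H.induce c2.supp ≃g B)
    (hc : ∃ f : Fin 6 → Fin n1 ⊕ Fin n2, Function.Injective f ∧
       ∀ u v, X.Adj u v ↔ (sumG A B).Adj (f u) (f v)) : False := by
  have sep : ∀ a b, ¬ H.Reachable (compEmb φ a) (compEmb ψ b) := fun a b =>
    sep_mem hcc (compEmb_mem φ a) (compEmb_mem ψ b)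
  exact HFree.elim' fX (glue (compEmb φ) (compEmb ψ) sep) hc

noncomputable def buildEmb1 {V : Type*} {H : SimpleGraph V} {n1 k : ℕ} {A : SimpleGraph (Fin n1)}
    {c1 : H.ConnectedComponent} (φ : H.induce c1.supp ≃g A)
    (hiso : ∀ v, v ∉ c1.supp → Isolated H v)
    (g : ↥(c1.suppᶜ) ↪ Fin k) :
    H ↪g sumG A (sumG (⊥ : SimpleGraph (Fin 0)) (⊥ : SimpleGraph (Fin k))) := by
  haveI : IsEmpty ↥(∅ : Set V) := ⟨fun x => x.2⟩
  refine glueCover3 H c1.supp ∅ c1.suppᶜ ?_ ?_ ?_ ?_ φ.toEmbedding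
    (emptyEmb _ _) (restEmb _ (fun v hv => hiso v hv) g)
  · intro v
    by_cases h : v ∈ c1.supp
    · exact Or.inl h
    · exact Or.inr (Or.inr h)
  · exact fun u v _ hv => absurd hv (Set.notMem_empty v)
  · exact fun u v hu hv had => hiso v hv u had.symm
  · exact fun u v hu _ => absurd hu (Set.notMem_empty u)

noncomputable def buildEmb2 {V : Type*} {H : SimpleGraph V} {n1 n2 k : ℕ}
    {A : SimpleGraph (Fin n1)} {B : SimpleGraph (Fin n2)}
    {c1 c2 : H.ConnectedComponent} (hcc : c1 ≠ c2)
    (φ : H.induce c1.supp ≃g A) (ψ : H.induce c2.supp ≃g B)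
    (hiso : ∀ v, v ∉ c1.supp → v ∉ c2.supp → Isolated H v)
    (g : ↥((c1.supp ∪ c2.supp)ᶜ) ↪ Fin k) :
    H ↪g sumG A (sumG B (⊥ : SimpleGraph (Fin k))) := by
  have hiso' : ∀ v ∈ (c1.supp ∪ c2.supp)ᶜ, Isolated H v := fun v hv =>
    hiso v (fun h => hv (Or.inl h)) (fun h => hv (Or.inr h))
  refine glueCover3 H c1.supp c2.supp ((c1.supp ∪ c2.supp)ᶜ) ?_ ?_ ?_ ?_ φ.toEmbedding
    ψ.toEmbedding (restEmb _ hiso' g)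
  · intro v
    by_cases h1 : v ∈ c1.supp
    · exact Or.inl h1
    · by_cases h2 : v ∈ c2.supp
      · exact Or.inr (Or.inl h2)
      · exact Or.inr (Or.inr (fun h => h.elim h1 h2))
  · intro u v hu hv had
    rw [SimpleGraph.ConnectedComponent.mem_supp_iff] at hu hv
    exact hcc (hu ▸ hv ▸ comp_eq_of_adj had)
  · exact fun u v hu hv had => hiso' v hv u had.symm
  · exact fun u v hu hv had => hiso' v hv u had.symm

lemma case1core {V : Type*} [Fintype V] {H : SimpleGraph V}
    (f1 : HFree H g2P1'2P2) (f2 : HFree H g2P1'P4) (f3 : HFree H g4P1'P2)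
    (f4 : HFree H g3P2) (f5 : HFree H g2P3)
    {c1 : H.ConnectedComponent} (sh : ShapeD H c1)
    (hiso : ∀ v, v ∉ c1.supp → Isolated H v) :
    Nonempty (H ↪g gK13'3P1) ∨ Nonempty (H ↪g gK13'P2) ∨ Nonempty (H ↪g gP1'S113) ∨
      Nonempty (H ↪g gS123) := by
  unfold ShapeD at sh
  rcases sh with ⟨⟨φ⟩⟩|⟨⟨φ⟩⟩|⟨⟨φ⟩⟩|⟨⟨φ⟩⟩|⟨⟨φ⟩⟩|⟨⟨φ⟩⟩|⟨⟨φ⟩⟩|⟨⟨φ⟩⟩|⟨⟨φ⟩⟩|⟨⟨φ⟩⟩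
  · rcases isolated_emb_or (c1.suppᶜ) 3 with ⟨⟨g⟩⟩ | ⟨g, hginj, hgmem⟩
    · exact Or.inl ⟨(buildEmb1 φ hiso g).trans (mkEmb _ gK13'3P1 (Sum.elim ![0,1] (Sum.elim ![] ![4,5,6])) (by decide) (by decide))⟩
    · exact (contra1 f3 φ (by decide : (SimpleGraph.pathGraph 2).Adj 0 1) g hginj
        (fun t => hiso _ (hgmem t))
        ⟨![Sum.inr 0, Sum.inr 1, Sum.inr 2, Sum.inr 3, Sum.inl 0, Sum.inl 1], by decide, by decide⟩).elim
  · rcases isolated_emb_or (c1.suppᶜ) 3 with ⟨⟨g⟩⟩ | ⟨g, hginj, hgmem⟩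
    · exact Or.inl ⟨(buildEmb1 φ hiso g).trans (mkEmb _ gK13'3P1 (Sum.elim ![1,0,2] (Sum.elim ![] ![4,5,6])) (by decide) (by decide))⟩
    · exact (contra1 f3 φ (by decide : (SimpleGraph.pathGraph 3).Adj 0 1) g hginj
        (fun t => hiso _ (hgmem t))
        ⟨![Sum.inr 0, Sum.inr 1, Sum.inr 2, Sum.inr 3, Sum.inl 0, Sum.inl 1], by decide, by decide⟩).elim
  · rcases isolated_emb_or (c1.suppᶜ) 1 with ⟨⟨g⟩⟩ | ⟨g, hginj, hgmem⟩
    · exact Or.inr (Or.inr (Or.inl ⟨(buildEmb1 φ hiso g).trans (mkEmb _ gP1'S113 (Sum.elim ![1,4,5,6] (Sum.elim ![] ![0])) (by decide) (by decide))⟩))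
    · exact (contra1 f2 φ (by decide : (SimpleGraph.pathGraph 4).Adj 0 1) g hginj
        (fun t => hiso _ (hgmem t))
        ⟨![Sum.inr 0, Sum.inr 1, Sum.inl 0, Sum.inl 1, Sum.inl 2, Sum.inl 3], by decide, by decide⟩).elim
  · rcases isolated_emb_or (c1.suppᶜ) 1 with ⟨⟨g⟩⟩ | ⟨g, hginj, hgmem⟩
    · exact Or.inr (Or.inr (Or.inl ⟨(buildEmb1 φ hiso g).trans (mkEmb _ gP1'S113 (Sum.elim ![2,1,4,5,6] (Sum.elim ![] ![0])) (by decide) (by decide))⟩))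
    · exact (contra1 f2 φ (by decide : (SimpleGraph.pathGraph 5).Adj 0 1) g hginj
        (fun t => hiso _ (hgmem t))
        ⟨![Sum.inr 0, Sum.inr 1, Sum.inl 0, Sum.inl 1, Sum.inl 2, Sum.inl 3], by decide, by decide⟩).elim
  · rcases isolated_emb_or (c1.suppᶜ) 0 with ⟨⟨g⟩⟩ | ⟨g, hginj, hgmem⟩
    · exact Or.inr (Or.inr (Or.inr ⟨(buildEmb1 φ hiso g).trans (mkEmb _ gS123 (Sum.elim ![3,2,0,4,5,6] (Sum.elim ![] ![])) (by decide) (by decide))⟩))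
    · exact (contra1 f2 φ (by decide : (SimpleGraph.pathGraph 6).Adj 0 1) g hginj
        (fun t => hiso _ (hgmem t))
        ⟨![Sum.inl 5, Sum.inr 0, Sum.inl 0, Sum.inl 1, Sum.inl 2, Sum.inl 3], by decide, by decide⟩).elim
  · rcases isolated_emb_or (c1.suppᶜ) 3 with ⟨⟨g⟩⟩ | ⟨g, hginj, hgmem⟩
    · exact Or.inl ⟨(buildEmb1 φ hiso g).trans (mkEmb _ gK13'3P1 (Sum.elim ![0,1,2,3] (Sum.elim ![] ![4,5,6])) (by decide) (by decide))⟩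
    · exact (contra1 f3 φ (by decide : (subdividedClaw 1 1 1).Adj 0 1) g hginj
        (fun t => hiso _ (hgmem t))
        ⟨![Sum.inr 0, Sum.inr 1, Sum.inr 2, Sum.inr 3, Sum.inl 0, Sum.inl 1], by decide, by decide⟩).elim
  · rcases isolated_emb_or (c1.suppᶜ) 1 with ⟨⟨g⟩⟩ | ⟨g, hginj, hgmem⟩
    · exact Or.inr (Or.inr (Or.inl ⟨(buildEmb1 φ hiso g).trans (mkEmb _ gP1'S113 (Sum.elim ![1,2,3,4,5] (Sum.elim ![] ![0])) (by decide) (by decide))⟩))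
    · exact (contra1 f2 φ (by decide : (subdividedClaw 1 1 2).Adj 0 1) g hginj
        (fun t => hiso _ (hgmem t))
        ⟨![Sum.inr 0, Sum.inr 1, Sum.inl 1, Sum.inl 0, Sum.inl 3, Sum.inl 4], by decide, by decide⟩).elim
  · rcases isolated_emb_or (c1.suppᶜ) 1 with ⟨⟨g⟩⟩ | ⟨g, hginj, hgmem⟩
    · exact Or.inr (Or.inr (Or.inl ⟨(buildEmb1 φ hiso g).trans (mkEmb _ gP1'S113 (Sum.elim ![1,2,3,4,5,6] (Sum.elim ![] ![0])) (by decide) (by decide))⟩))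
    · exact (contra1 f2 φ (by decide : (subdividedClaw 1 1 3).Adj 0 1) g hginj
        (fun t => hiso _ (hgmem t))
        ⟨![Sum.inr 0, Sum.inr 1, Sum.inl 0, Sum.inl 3, Sum.inl 4, Sum.inl 5], by decide, by decide⟩).elim
  · rcases isolated_emb_or (c1.suppᶜ) 0 with ⟨⟨g⟩⟩ | ⟨g, hginj, hgmem⟩
    · exact Or.inr (Or.inr (Or.inr ⟨(buildEmb1 φ hiso g).trans (mkEmb _ gS123 (Sum.elim ![0,1,2,3,4,5] (Sum.elim ![] ![])) (by decide) (by decide))⟩))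
    · exact (contra1 f1 φ (by decide : (subdividedClaw 1 2 2).Adj 0 1) g hginj
        (fun t => hiso _ (hgmem t))
        ⟨![Sum.inl 1, Sum.inr 0, Sum.inl 2, Sum.inl 3, Sum.inl 4, Sum.inl 5], by decide, by decide⟩).elim
  · rcases isolated_emb_or (c1.suppᶜ) 0 with ⟨⟨g⟩⟩ | ⟨g, hginj, hgmem⟩
    · exact Or.inr (Or.inr (Or.inr ⟨(buildEmb1 φ hiso g).trans (mkEmb _ gS123 (Sum.elim ![0,1,2,3,4,5,6] (Sum.elim ![] ![])) (by decide) (by decide))⟩))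
    · exact (contra1 f2 φ (by decide : (subdividedClaw 1 2 3).Adj 0 1) g hginj
        (fun t => hiso _ (hgmem t))
        ⟨![Sum.inl 5, Sum.inr 0, Sum.inl 1, Sum.inl 0, Sum.inl 2, Sum.inl 3], by decide, by decide⟩).elim

lemma case2core {V : Type*} [Fintype V] {H : SimpleGraph V}
    (f1 : HFree H g2P1'2P2) (f2 : HFree H g2P1'P4) (f3 : HFree H g4P1'P2)
    (f4 : HFree H g3P2) (f5 : HFree H g2P3)
    {c cp : H.ConnectedComponent} (hcc : c ≠ cp)
    (ψ : H.induce cp.supp ≃g SimpleGraph.pathGraph 2)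
    (sh : ShapeD H c)
    (hiso : ∀ v, v ∉ c.supp → v ∉ cp.supp → Isolated H v) :
    Nonempty (H ↪g gK13'3P1) ∨ Nonempty (H ↪g gK13'P2) ∨ Nonempty (H ↪g gP1'S113) ∨
      Nonempty (H ↪g gS123) := by
  unfold ShapeD at sh
  rcases sh with ⟨⟨φ⟩⟩|⟨⟨φ⟩⟩|⟨⟨φ⟩⟩|⟨⟨φ⟩⟩|⟨⟨φ⟩⟩|⟨⟨φ⟩⟩|⟨⟨φ⟩⟩|⟨⟨φ⟩⟩|⟨⟨φ⟩⟩|⟨⟨φ⟩⟩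
  · rcases isolated_emb_or ((c.supp ∪ cp.supp)ᶜ) 1 with ⟨⟨g⟩⟩ | ⟨g, hginj, hgmem⟩
    · exact Or.inr (Or.inr (Or.inl ⟨(buildEmb2 hcc φ ψ hiso g).trans (mkEmb _ gP1'S113 (Sum.elim ![1,2] (Sum.elim ![5,6] ![0])) (by decide) (by decide))⟩))
    · exact (contra2 f1 hcc φ ψ (by decide : (SimpleGraph.pathGraph 2).Adj 0 1)
        (by decide : (SimpleGraph.pathGraph 2).Adj 0 1) g hginj
        (fun t => hiso _ (fun hm => (hgmem t) (Or.inl hm)) (fun hm => (hgmem t) (Or.inr hm)))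
        ⟨![Sum.inr (Sum.inr 0), Sum.inr (Sum.inr 1), Sum.inl 0, Sum.inl 1, Sum.inr (Sum.inl 0), Sum.inr (Sum.inl 1)], by decide, by decide⟩).elim
  · rcases isolated_emb_or ((c.supp ∪ cp.supp)ᶜ) 1 with ⟨⟨g⟩⟩ | ⟨g, hginj, hgmem⟩
    · exact Or.inr (Or.inr (Or.inl ⟨(buildEmb2 hcc φ ψ hiso g).trans (mkEmb _ gP1'S113 (Sum.elim ![2,1,3] (Sum.elim ![5,6] ![0])) (by decide) (by decide))⟩))
    · exact (contra2 f1 hcc φ ψ (by decide : (SimpleGraph.pathGraph 3).Adj 0 1)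
        (by decide : (SimpleGraph.pathGraph 2).Adj 0 1) g hginj
        (fun t => hiso _ (fun hm => (hgmem t) (Or.inl hm)) (fun hm => (hgmem t) (Or.inr hm)))
        ⟨![Sum.inr (Sum.inr 0), Sum.inr (Sum.inr 1), Sum.inl 0, Sum.inl 1, Sum.inr (Sum.inl 0), Sum.inr (Sum.inl 1)], by decide, by decide⟩).elim
  · rcases isolated_emb_or ((c.supp ∪ cp.supp)ᶜ) 0 with ⟨⟨g⟩⟩ | ⟨g, hginj, hgmem⟩
    · exact Or.inr (Or.inr (Or.inr ⟨(buildEmb2 hcc φ ψ hiso g).trans (mkEmb _ gS123 (Sum.elim ![1,0,2,3] (Sum.elim ![5,6] ![])) (by decide) (by decide))⟩))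
    · exact (contra2 f1 hcc φ ψ (by decide : (SimpleGraph.pathGraph 4).Adj 0 1)
        (by decide : (SimpleGraph.pathGraph 2).Adj 0 1) g hginj
        (fun t => hiso _ (fun hm => (hgmem t) (Or.inl hm)) (fun hm => (hgmem t) (Or.inr hm)))
        ⟨![Sum.inl 3, Sum.inr (Sum.inr 0), Sum.inl 0, Sum.inl 1, Sum.inr (Sum.inl 0), Sum.inr (Sum.inl 1)], by decide, by decide⟩).elim
  · exact (contra2e f4 hcc φ ψ ⟨![Sum.inl 0, Sum.inl 1, Sum.inl 3, Sum.inl 4, Sum.inr 0, Sum.inr 1], by decide, by decide⟩).elim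
  · exact (contra2e f4 hcc φ ψ ⟨![Sum.inl 0, Sum.inl 1, Sum.inl 3, Sum.inl 4, Sum.inr 0, Sum.inr 1], by decide, by decide⟩).elim
  · rcases isolated_emb_or ((c.supp ∪ cp.supp)ᶜ) 0 with ⟨⟨g⟩⟩ | ⟨g, hginj, hgmem⟩
    · exact Or.inr (Or.inl ⟨(buildEmb2 hcc φ ψ hiso g).trans (mkEmb _ gK13'P2 (Sum.elim ![0,1,2,3] (Sum.elim ![4,5] ![])) (by decide) (by decide))⟩)
    · exact (contra2 f3 hcc φ ψ (by decide : (subdividedClaw 1 1 1).Adj 0 1)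
        (by decide : (SimpleGraph.pathGraph 2).Adj 0 1) g hginj
        (fun t => hiso _ (fun hm => (hgmem t) (Or.inl hm)) (fun hm => (hgmem t) (Or.inr hm)))
        ⟨![Sum.inl 1, Sum.inl 2, Sum.inl 3, Sum.inr (Sum.inr 0), Sum.inr (Sum.inl 0), Sum.inr (Sum.inl 1)], by decide, by decide⟩).elim
  · exact (contra2e f1 hcc φ ψ ⟨![Sum.inl 1, Sum.inl 2, Sum.inl 3, Sum.inl 4, Sum.inr 0, Sum.inr 1], by decide, by decide⟩).elim
  · exact (contra2e f1 hcc φ ψ ⟨![Sum.inl 1, Sum.inl 2, Sum.inl 4, Sum.inl 5, Sum.inr 0, Sum.inr 1], by decide, by decide⟩).elim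
  · exact (contra2e f4 hcc φ ψ ⟨![Sum.inl 2, Sum.inl 3, Sum.inl 4, Sum.inl 5, Sum.inr 0, Sum.inr 1], by decide, by decide⟩).elim
  · exact (contra2e f4 hcc φ ψ ⟨![Sum.inl 2, Sum.inl 3, Sum.inl 5, Sum.inl 6, Sum.inr 0, Sum.inr 1], by decide, by decide⟩).elim

/-- Let `H ∈ S`. Then `H` is `(2P_1+2P_2, 2P_1+P_4, 4P_1+P_2, 3P_2, 2P_3)`-free
if and only if `H` is isomorphic to `sP_1` for some `s ≥ 1` or `H` is isomorphic
to an induced subgraph of one of `K_{1,3}+3P_1`, `K_{1,3}+P_2`, `P_1+S_{1,1,3}`,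
`S_{1,2,3}`. -/
theorem stmt_8 {V : Type*} [Fintype V] (H : SimpleGraph V) (hS : InClassS H) :
    (HFree H g2P1'2P2 ∧ HFree H g2P1'P4 ∧ HFree H g4P1'P2 ∧
      HFree H g3P2 ∧ HFree H g2P3) ↔
    ((∃ s : ℕ, 1 ≤ s ∧ Nonempty (H ≃g (⊥ : SimpleGraph (Fin s)))) ∨
      Nonempty (H ↪g gK13'3P1) ∨ Nonempty (H ↪g gK13'P2) ∨
      Nonempty (H ↪g gP1'S113) ∨ Nonempty (H ↪g gS123)) := by
  classical
  constructor
  · rintro ⟨f1, f2, f3, f4, f5⟩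
    by_cases hE : ∃ x y, H.Adj x y
    · obtain ⟨x1, y1, hxy1⟩ := hE
      have hx1 : x1 ∈ (H.connectedComponentMk x1).supp :=
        (SimpleGraph.ConnectedComponent.mem_supp_iff _ _).mpr rfl
      have sh1 := shape hS f4 f5 (H.connectedComponentMk x1) hxy1 hx1
      by_cases hE2 : ∃ x y, H.Adj x y ∧ H.connectedComponentMk x ≠ H.connectedComponentMk x1
      · obtain ⟨x2, y2, hxy2, hne2⟩ := hE2
        have hx2 : x2 ∈ (H.connectedComponentMk x2).supp :=
          (SimpleGraph.ConnectedComponent.mem_supp_iff _ _).mpr rfl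
        have sh2 := shape hS f4 f5 (H.connectedComponentMk x2) hxy2 hx2
        have hiso : ∀ v, v ∉ (H.connectedComponentMk x2).supp →
            v ∉ (H.connectedComponentMk x1).supp → Isolated H v := by
          intro v hv2 hv1 w hw
          rw [SimpleGraph.ConnectedComponent.mem_supp_iff] at hv1 hv2
          exact three_comp f4 hxy1 hxy2 hw hne2.symm
            (fun e => hv1 e.symm) (fun e => hv2 e.symm)
        rcases shape_p3 sh1 with ⟨⟨ψ⟩⟩ | ⟨⟨e1⟩⟩
        · exact Or.inr (case2core f1 f2 f3 f4 f5 hne2 ψ sh2 hiso)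
        · rcases shape_p3 sh2 with ⟨⟨ψ⟩⟩ | ⟨⟨e2⟩⟩
          · exact Or.inr (case2core f1 f2 f3 f4 f5 hne2.symm ψ sh1
              (fun v h1 h2 => hiso v h2 h1))
          · exact (two_p3 f5 hne2.symm e1 e2).elim
      · push_neg at hE2
        have hiso : ∀ v, v ∉ (H.connectedComponentMk x1).supp → Isolated H v := by
          intro v hv w hw
          rw [SimpleGraph.ConnectedComponent.mem_supp_iff] at hv
          exact hv (hE2 v w hw)
        exact Or.inr (case1core f1 f2 f3 f4 f5 sh1 hiso)
    · push_neg at hE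
      rcases Nat.eq_zero_or_pos (Fintype.card V) with h0 | hpos
      · haveI : IsEmpty V := Fintype.card_eq_zero_iff.mp h0
        exact Or.inr (Or.inr (Or.inr (Or.inr ⟨emptyEmb H gS123⟩)))
      · refine Or.inl ⟨Fintype.card V, hpos, ⟨⟨Fintype.equivFin V, ?_⟩⟩⟩
        intro a b
        exact iff_of_false (fun h => h) (hE a b)
  · rintro (h | h | h | h | h)
    · obtain ⟨s, _, ⟨e⟩⟩ := h
      have hne : ∀ u v, ¬H.Adj u v := fun u v h => by
        simpa using e.map_rel_iff.mpr h
      exact ⟨hfree_of_noedge hne ⟨2, 3, by decide⟩, hfree_of_noedge hne ⟨2, 3, by decide⟩,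
        hfree_of_noedge hne ⟨4, 5, by decide⟩, hfree_of_noedge hne ⟨0, 1, by decide⟩,
        hfree_of_noedge hne ⟨0, 1, by decide⟩⟩
    · obtain ⟨e⟩ := h
      exact ⟨HFree.mono e free_0_0, HFree.mono e free_0_1, HFree.mono e free_0_2,
        HFree.mono e free_0_3, HFree.mono e free_0_4⟩
    · obtain ⟨e⟩ := h
      exact ⟨HFree.mono e free_1_0, HFree.mono e free_1_1, HFree.mono e free_1_2,
        HFree.mono e free_1_3, HFree.mono e free_1_4⟩
    · obtain ⟨e⟩ := h
      exact ⟨HFree.mono e free_2_0, HFree.mono e free_2_1, HFree.mono e free_2_2,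
        HFree.mono e free_2_3, HFree.mono e free_2_4⟩
    · obtain ⟨e⟩ := h
      exact ⟨HFree.mono e free_3_0, HFree.mono e free_3_1, HFree.mono e free_3_2,
        HFree.mono e free_3_3, HFree.mono e free_3_4⟩
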